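/- Suppose F₀* is a symmetric probability distribution function with M := sup_{x>0} x^α (1 − F₀*(x)) < ∞, where α ∈ (0,2). Then for every ε > 0 there is a constant C_ε > 0, depending only on M, α, ε, such that for every n ≥ 1 and every nonnegative weights β₁,…,β_n with each β_j ≤ 1 and ∑_j β_j^α = 1, and X₁,…,X_n i.i.d. with distribution function F₀*, one has P(|∑_{j=1}^n β_j X_j| > C_ε) ≤ ε. -/

import Mathlib

open MeasureTheory ProbabilityTheory Set

noncomputable def trunc (t z : ℝ) : ℝ := if |z| ≤ t then z else 0

lemma trunc_meas (t : ℝ) : Measurable (trunc t) :=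
  Measurable.ite (measurableSet_le measurable_abs measurable_const) measurable_id
    measurable_const

lemma abs_trunc_le {t : ℝ} (ht : 0 ≤ t) (z : ℝ) : |trunc t z| ≤ t := by
  unfold trunc; split
  · assumption
  · simpa using ht

lemma trunc_neg (t z : ℝ) : trunc t (-z) = - trunc t z := by
  unfold trunc; rw [abs_neg]; split <;> simp

lemma trunc_sq_le (t z : ℝ) : (trunc t z)^2 ≤ z^2 := by
  unfold trunc; split
  · exact le_refl _
  · simpa using sq_nonneg z

lemma trunc_eq_of_le {t z : ℝ} (h : |z| ≤ t) : trunc t z = z := if_pos h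

lemma tail_bound {ν : Measure ℝ} [IsProbabilityMeasure ν] {α M : ℝ}
    (hα0 : 0 < α) (hM : 0 ≤ M)
    (hsym : ν.map (fun x => -x) = ν)
    (htail : ∀ x : ℝ, 0 < x → x ^ α * (ν (Ioi x)).toReal ≤ M)
    {u : ℝ} (hu : 0 < u) :
    ν {x | u < |x|} ≤ ENNReal.ofReal (2 * (M / u ^ α)) := by
  have hpos : 0 < u ^ α := Real.rpow_pos_of_pos hu α
  have hdivnn : 0 ≤ M / u ^ α := div_nonneg hM hpos.le
  have h1 : ν (Ioi u) ≤ ENNReal.ofReal (M / u ^ α) := by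
    have h2 : (ν (Ioi u)).toReal ≤ M / u ^ α := by
      rw [le_div_iff₀ hpos]
      have := htail u hu
      linarith [mul_comm (u ^ α) ((ν (Ioi u)).toReal)]
    calc ν (Ioi u) = ENNReal.ofReal (ν (Ioi u)).toReal :=
          (ENNReal.ofReal_toReal (measure_ne_top ν _)).symm
      _ ≤ _ := ENNReal.ofReal_le_ofReal h2
  have h3 : ν (Iio (-u)) = ν (Ioi u) := by
    conv_lhs => rw [← hsym]
    rw [Measure.map_apply measurable_neg measurableSet_Iio]
    congr 1
    ext x
    simp [neg_lt]
  have hsub : {x : ℝ | u < |x|} ⊆ Iio (-u) ∪ Ioi u := by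
    intro x hx
    have hx' : u < |x| := hx
    rcases lt_abs.mp hx' with h | h
    · exact Or.inr h
    · exact Or.inl (by simp only [mem_Iio]; linarith)
  calc ν {x | u < |x|} ≤ ν (Iio (-u) ∪ Ioi u) := measure_mono hsub
    _ ≤ ν (Iio (-u)) + ν (Ioi u) := measure_union_le _ _
    _ = ν (Ioi u) + ν (Ioi u) := by rw [h3]
    _ ≤ ENNReal.ofReal (M / u ^ α) + ENNReal.ofReal (M / u ^ α) := add_le_add h1 h1
    _ = ENNReal.ofReal (2 * (M / u ^ α)) := by
        rw [← ENNReal.ofReal_add hdivnn hdivnn]; ring_nf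

lemma integral_odd_eq_zero {ν : Measure ℝ}
    (hsym : ν.map (fun x => -x) = ν) {g : ℝ → ℝ} (hg : Measurable g)
    (hodd : ∀ x, g (-x) = - g x) : ∫ x, g x ∂ν = 0 := by
  have h1 : ∫ x, g x ∂ν = ∫ x, g (-x) ∂ν := by
    conv_lhs => rw [← hsym]
    rw [integral_map measurable_neg.aemeasurable hg.aestronglyMeasurable]
  have h2 : ∫ x, g (-x) ∂ν = - ∫ x, g x ∂ν := by
    simp_rw [hodd]
    exact integral_neg g
  linarith

lemma trunc_sq_moment {ν : Measure ℝ} [IsProbabilityMeasure ν] {α M : ℝ}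
    (hα0 : 0 < α) (hα2 : α < 2) (hM : 0 ≤ M)
    (hsym : ν.map (fun x => -x) = ν)
    (htail : ∀ x : ℝ, 0 < x → x ^ α * (ν (Ioi x)).toReal ≤ M)
    {b t : ℝ} (hb0 : 0 ≤ b) (ht : 0 < t) :
    ∫ x, (trunc t (b * x))^2 ∂ν ≤ 2 * M * b ^ α * t ^ (2 - α) / (1 - α/2) := by
  have hden : (0:ℝ) < 1 - α/2 := by linarith
  rcases eq_or_lt_of_le hb0 with hb | hb
  · have h0 : ∀ x : ℝ, (trunc t (b*x))^2 = 0 := by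
      intro x
      rw [← hb, zero_mul, trunc_eq_of_le (by simp [ht.le])]
      norm_num
    simp_rw [h0]
    rw [integral_zero, ← hb, Real.zero_rpow hα0.ne']
    simp
  · set g : ℝ → ℝ := fun x => (trunc t (b*x))^2 with hgdef
    have hgm : Measurable g := ((trunc_meas t).comp (measurable_const_mul b)).pow_const 2
    have hg0 : ∀ x, 0 ≤ g x := fun x => sq_nonneg _
    have hgle : ∀ x, g x ≤ t^2 := by
      intro x
      calc g x = |trunc t (b*x)|^2 := (sq_abs _).symm
        _ ≤ t^2 := pow_le_pow_left₀ (abs_nonneg _) (abs_trunc_le ht.le (b*x)) 2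
    have hint : ∫ x, g x ∂ν = (∫⁻ x, ENNReal.ofReal (g x) ∂ν).toReal :=
      integral_eq_lintegral_of_nonneg_ae (Filter.Eventually.of_forall hg0)
        hgm.aestronglyMeasurable
    have hlc : ∫⁻ x, ENNReal.ofReal (g x) ∂ν = ∫⁻ s in Ioi (0:ℝ), ν {x | s < g x} :=
      lintegral_eq_lintegral_meas_lt ν (Filter.Eventually.of_forall hg0) hgm.aemeasurable
    have hsplit : ∫⁻ s in Ioi (0:ℝ), ν {x | s < g x}
        = (∫⁻ s in Ioc (0:ℝ) (t^2), ν {x | s < g x})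
          + ∫⁻ s in Ioi (t^2), ν {x | s < g x} := by
      rw [← lintegral_union measurableSet_Ioi (Ioc_disjoint_Ioi le_rfl),
        Ioc_union_Ioi_eq_Ioi (by positivity : (0:ℝ) ≤ t^2)]
    have hright : ∫⁻ s in Ioi (t^2), ν {x | s < g x} = 0 := by
      rw [setLIntegral_congr_fun measurableSet_Ioi
        (fun s hs => ?_), lintegral_zero]
      have : {x | s < g x} = ∅ := by
        ext x
        simp only [mem_setOf_eq, mem_empty_iff_false, iff_false, not_lt]
        exact le_trans (hgle x) (le_of_lt hs)
      rw [this, measure_empty]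
    have hbound : ∀ s ∈ Ioc (0:ℝ) (t^2),
        ν {x | s < g x} ≤ ENNReal.ofReal (2 * (M * b ^ α) * s ^ (-(α/2))) := by
      rintro s ⟨hs0, _⟩
      have hsqrtpos : 0 < Real.sqrt s / b := div_pos (Real.sqrt_pos.mpr hs0) hb
      have hsub : {x | s < g x} ⊆ {x | Real.sqrt s / b < |x|} := by
        intro x hx
        have hx' : s < (b*x)^2 := lt_of_lt_of_le hx (trunc_sq_le t (b*x))
        have h1 : Real.sqrt s < |b * x| := by
          calc Real.sqrt s < Real.sqrt ((b*x)^2) := Real.sqrt_lt_sqrt hs0.le hx'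
            _ = |b*x| := Real.sqrt_sq_eq_abs _
        rw [abs_mul, abs_of_nonneg hb.le] at h1
        exact (div_lt_iff₀ hb).2 (by linarith)
      refine le_trans (measure_mono hsub)
        (le_trans (tail_bound hα0 hM hsym htail hsqrtpos) (le_of_eq ?_))
      congr 1
      have h1 : (Real.sqrt s / b) ^ α = s ^ (α/2) / b ^ α := by
        rw [Real.div_rpow (Real.sqrt_nonneg s) hb0]
        congr 1
        rw [Real.sqrt_eq_rpow, ← Real.rpow_mul hs0.le]
        congr 1
        ring
      have hs2 : (0:ℝ) < s ^ (α/2) := Real.rpow_pos_of_pos hs0 _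
      have hbα : (0:ℝ) < b ^ α := Real.rpow_pos_of_pos hb _
      rw [h1, Real.rpow_neg hs0.le]
      field_simp
    have hintg : IntegrableOn (fun s : ℝ => 2 * (M * b ^ α) * s ^ (-(α/2)))
        (Ioc (0:ℝ) (t^2)) volume := by
      have h1 : IntervalIntegrable (fun s : ℝ => s ^ (-(α/2))) volume 0 (t^2) :=
        intervalIntegral.intervalIntegrable_rpow' (by linarith)
      have h2 := h1.const_mul (2 * (M * b ^ α))
      rwa [intervalIntegrable_iff_integrableOn_Ioc_of_le (by positivity)] at h2
    have hval : ∫ s in Ioc (0:ℝ) (t^2), 2 * (M * b ^ α) * s ^ (-(α/2))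
        = 2 * (M * b ^ α) * ((t^2) ^ (1 - α/2) / (1 - α/2)) := by
      rw [← intervalIntegral.integral_of_le (by positivity : (0:ℝ) ≤ t^2),
        intervalIntegral.integral_const_mul,
        integral_rpow (Or.inl (by linarith : (-1:ℝ) < -(α/2)))]
      rw [Real.zero_rpow (by linarith : -(α/2) + 1 ≠ 0)]
      have he : -(α/2) + 1 = 1 - α/2 := by ring
      rw [he]
      ring
    have hleft : (∫⁻ s in Ioc (0:ℝ) (t^2), ν {x | s < g x})
        ≤ ENNReal.ofReal (2 * (M * b ^ α) * ((t^2) ^ (1 - α/2) / (1 - α/2))) := by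
      calc (∫⁻ s in Ioc (0:ℝ) (t^2), ν {x | s < g x})
          ≤ ∫⁻ s in Ioc (0:ℝ) (t^2), ENNReal.ofReal (2 * (M * b ^ α) * s ^ (-(α/2))) :=
            setLIntegral_mono (by measurability) hbound
        _ = ENNReal.ofReal (∫ s in Ioc (0:ℝ) (t^2), 2 * (M * b ^ α) * s ^ (-(α/2))) :=
            (ofReal_integral_eq_lintegral_ofReal hintg
              (ae_restrict_of_forall_mem measurableSet_Ioc (fun s hs =>
                mul_nonneg (mul_nonneg (by norm_num) (mul_nonneg hM
                  (Real.rpow_nonneg hb0 _))) (Real.rpow_nonneg hs.1.le _)))).symm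
        _ = _ := by rw [hval]
    have htotal : ∫⁻ x, ENNReal.ofReal (g x) ∂ν
        ≤ ENNReal.ofReal (2 * (M * b ^ α) * ((t^2) ^ (1 - α/2) / (1 - α/2))) := by
      rw [hlc, hsplit, hright, add_zero]; exact hleft
    have hts : ((t^2 : ℝ)) ^ (1 - α/2) = t ^ (2 - α) := by
      rw [← Real.rpow_natCast t 2, ← Real.rpow_mul ht.le]
      congr 1
      push_cast
      ring
    have hrhs : 2 * (M * b ^ α) * ((t^2) ^ (1 - α/2) / (1 - α/2))
        = 2 * M * b ^ α * t ^ (2 - α) / (1 - α/2) := by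
      rw [hts]; ring
    have hnn : 0 ≤ 2 * (M * b ^ α) * ((t^2) ^ (1 - α/2) / (1 - α/2)) := by
      have h1 : (0:ℝ) ≤ ((t^2:ℝ)) ^ (1 - α/2) := Real.rpow_nonneg (by positivity) _
      have h2 : (0:ℝ) ≤ b ^ α := Real.rpow_nonneg hb0 _
      positivity
    rw [hint, ← hrhs]
    exact ENNReal.toReal_le_of_le_ofReal hnn htotal

theorem uniform_tightness_weighted_sums (α M ε : ℝ)
    (hα0 : 0 < α) (hα2 : α < 2) (hM : 0 ≤ M) (hε : 0 < ε) :
    ∃ C : ℝ, 0 < C ∧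
      ∀ (Ω : Type) (_ : MeasurableSpace Ω) (μ : Measure Ω),
        IsProbabilityMeasure μ →
      ∀ ν : Measure ℝ, IsProbabilityMeasure ν →
        ν.map (fun x => -x) = ν →
        (∀ x : ℝ, 0 < x → x ^ α * (ν (Ioi x)).toReal ≤ M) →
      ∀ n : ℕ, 1 ≤ n →
      ∀ (X : Fin n → Ω → ℝ) (β : Fin n → ℝ),
        (∀ j, 0 ≤ β j ∧ β j ≤ 1) → (∑ j, β j ^ α) = 1 →
        iIndepFun X μ →
        (∀ j, Measurable (X j) ∧ μ.map (X j) = ν) →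
        (μ {ω | C < |∑ j, β j * X j ω|}).toReal ≤ ε := by
  have hden : (0:ℝ) < 1 - α/2 := by linarith
  set t : ℝ := max 1 ((4*M/ε) ^ (1/α)) with htdef
  have ht : 0 < t := lt_of_lt_of_le one_pos (le_max_left _ _)
  have htαpos : 0 < t ^ α := Real.rpow_pos_of_pos ht α
  have htα : 4*M/ε ≤ t ^ α := by
    have h1 : (4*M/ε) ^ (1/α) ≤ t := le_max_right _ _
    have h2 : ((4*M/ε) ^ (1/α)) ^ α ≤ t ^ α :=
      Real.rpow_le_rpow (Real.rpow_nonneg (by positivity) _) h1 hα0.le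
    rwa [← Real.rpow_mul (by positivity), one_div, inv_mul_cancel₀ hα0.ne',
      Real.rpow_one] at h2
  have htail_half : 2*M / t ^ α ≤ ε/2 := by
    rw [div_le_iff₀ htαpos]
    have h4 : 4*M ≤ t ^ α * ε := (div_le_iff₀ hε).1 htα
    nlinarith
  set K : ℝ := 2*M * t ^ (2-α) / (1 - α/2) with hKdef
  have hK0 : 0 ≤ K :=
    div_nonneg (mul_nonneg (by linarith) (Real.rpow_nonneg ht.le _)) hden.le
  set C : ℝ := max 1 (Real.sqrt (2*K/ε)) with hCdef
  have hC : 0 < C := lt_of_lt_of_le one_pos (le_max_left _ _)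
  have hCK : K / C^2 ≤ ε/2 := by
    have h1 : Real.sqrt (2*K/ε) ≤ C := le_max_right _ _
    have h2 : 2*K/ε ≤ C^2 := by
      have h3 := Real.sq_sqrt (show (0:ℝ) ≤ 2*K/ε by positivity)
      nlinarith [Real.sqrt_nonneg (2*K/ε)]
    rw [div_le_iff₀ (by positivity)]
    have h5 : 2*K ≤ C^2 * ε := (div_le_iff₀ hε).1 h2
    nlinarith
  refine ⟨C, hC, ?_⟩
  intro Ω mΩ μ hμ ν hν hsym htail n hn X β hβ hβsum hind hX
  set Y : Fin n → Ω → ℝ := fun j ω => trunc t (β j * X j ω) with hYdef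
  have hXm : ∀ j, Measurable (X j) := fun j => (hX j).1
  have hmap : ∀ j, μ.map (X j) = ν := fun j => (hX j).2
  have hYm : ∀ j, Measurable (Y j) :=
    fun j => (trunc_meas t).comp ((hXm j).const_mul (β j))
  have hYbdd : ∀ j ω, |Y j ω| ≤ t := fun j ω => abs_trunc_le ht.le _
  have hYL2 : ∀ j, MemLp (Y j) 2 μ := fun j =>
    (memLp_top_of_bound (hYm j).aestronglyMeasurable t
      (Filter.Eventually.of_forall (fun ω => by
        simpa using hYbdd j ω))).mono_exponent le_top
  have hYmean : ∀ j, ∫ ω, Y j ω ∂μ = 0 := by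
    intro j
    have hg : Measurable (fun x : ℝ => trunc t (β j * x)) :=
      (trunc_meas t).comp (measurable_const_mul (β j))
    have h1 : ∫ ω, Y j ω ∂μ = ∫ x, trunc t (β j * x) ∂ν := by
      rw [← hmap j, integral_map (hXm j).aemeasurable hg.aestronglyMeasurable]
    rw [h1]
    exact integral_odd_eq_zero hsym hg
      (fun x => by rw [show β j * -x = -(β j * x) by ring, trunc_neg])
  have hYvar : ∀ j, variance (Y j) μ ≤ 2*M * (β j) ^ α * t ^ (2-α) / (1 - α/2) := by
    intro j
    have hg2 : Measurable (fun x : ℝ => (trunc t (β j * x))^2) :=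
      ((trunc_meas t).comp (measurable_const_mul (β j))).pow_const 2
    have h2 : ∫ ω, (Y j ω)^2 ∂μ = ∫ x, (trunc t (β j * x))^2 ∂ν := by
      rw [← hmap j, integral_map (hXm j).aemeasurable hg2.aestronglyMeasurable]
    have h3 := trunc_sq_moment hα0 hα2 hM hsym htail (hβ j).1 ht
    rw [variance_eq_sub (hYL2 j), hYmean j]
    have h5 : μ[(Y j) ^ 2] = ∫ ω, (Y j ω)^2 ∂μ := by
      simp only [Pi.pow_apply]
    rw [h5, h2]
    simp only [ne_eq, OfNat.ofNat_ne_zero, not_false_eq_true, zero_pow, sub_zero]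
    linarith
  have hYind : iIndepFun Y μ :=
    hind.comp (fun j (x:ℝ) => trunc t (β j * x))
      (fun j => (trunc_meas t).comp (measurable_const_mul (β j)))
  set T : Ω → ℝ := ∑ j, Y j with hTdef
  have hTL2 : MemLp T 2 μ := memLp_finsetSum' _ (fun j _ => hYL2 j)
  have hTmean : μ[T] = 0 := by
    rw [hTdef]
    rw [show (∑ j, Y j : Ω → ℝ) = fun ω => ∑ j, Y j ω from funext (fun ω => Finset.sum_apply ω _ _)]
    rw [integral_finset_sum _ (fun j _ => (hYL2 j).integrable one_le_two)]
    simp [hYmean]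
  have hTvar : variance T μ ≤ K := by
    rw [hTdef, IndepFun.variance_sum (fun j _ => hYL2 j)
      (fun i _ j _ hij => hYind.indepFun hij)]
    calc ∑ j, variance (Y j) μ
        ≤ ∑ j, 2*M * (β j)^α * t^(2-α)/(1-α/2) := Finset.sum_le_sum (fun j _ => hYvar j)
      _ = K := by
          have heach : ∀ j : Fin n, 2*M*(β j)^α*t^(2-α)/(1-α/2)
              = (β j)^α * (2*M*t^(2-α)/(1-α/2)) := fun j => by ring
          simp_rw [heach]
          rw [← Finset.sum_mul, hβsum, one_mul, hKdef]
  have hcheb := meas_ge_le_variance_div_sq hTL2 hC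
  rw [hTmean] at hcheb
  simp only [sub_zero] at hcheb
  have hcheb2 : μ {ω | C ≤ |T ω|} ≤ ENNReal.ofReal (ε/2) := by
    refine le_trans hcheb (ENNReal.ofReal_le_ofReal ?_)
    have h6 : variance T μ / C^2 ≤ K / C^2 := by gcongr
    linarith
  have hbadj : ∀ j, μ {ω | t < |β j * X j ω|}
      ≤ ENNReal.ofReal (2 * (M * (β j)^α / t^α)) := by
    intro j
    rcases eq_or_lt_of_le (hβ j).1 with hb | hb
    · have hempty : {ω | t < |β j * X j ω|} = ∅ := by
        ext ω
        simp only [mem_setOf_eq, mem_empty_iff_false, iff_false, not_lt, ← hb,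
          zero_mul, abs_zero]
        exact ht.le
      rw [hempty, measure_empty]
      exact zero_le
    · have hpre : {ω | t < |β j * X j ω|} = X j ⁻¹' {x | t / β j < |x|} := by
        ext ω
        simp only [mem_setOf_eq, mem_preimage]
        rw [abs_mul, abs_of_pos hb, div_lt_iff₀ hb, mul_comm]
      rw [hpre, ← Measure.map_apply (hXm j)
        (measurableSet_lt measurable_const measurable_abs), hmap j]
      refine le_trans (tail_bound hα0 hM hsym htail (div_pos ht hb)) (le_of_eq ?_)
      congr 1
      rw [Real.div_rpow ht.le (hβ j).1]
      have h2 : (0:ℝ) < β j ^ α := Real.rpow_pos_of_pos hb _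
      field_simp
  have hbad : μ (⋃ j, {ω | t < |β j * X j ω|}) ≤ ENNReal.ofReal (ε/2) := by
    have hsum : ∑ j, 2*(M*(β j)^α/t^α) = 2*M/t^α := by
      have heach : ∀ j : Fin n, 2*(M*(β j)^α/t^α) = (β j)^α * (2*M/t^α) :=
        fun j => by ring
      simp_rw [heach]
      rw [← Finset.sum_mul, hβsum, one_mul]
    calc μ (⋃ j, {ω | t < |β j * X j ω|})
        ≤ ∑ j, μ {ω | t < |β j * X j ω|} := measure_iUnion_fintype_le _ _
      _ ≤ ∑ j, ENNReal.ofReal (2 * (M * (β j)^α / t^α)) :=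
          Finset.sum_le_sum (fun j _ => hbadj j)
      _ = ENNReal.ofReal (∑ j, 2 * (M * (β j)^α / t^α)) :=
          (ENNReal.ofReal_sum_of_nonneg (fun j _ => by
            have h2 : (0:ℝ) ≤ β j ^ α := Real.rpow_nonneg (hβ j).1 _
            positivity)).symm
      _ ≤ ENNReal.ofReal (ε/2) := ENNReal.ofReal_le_ofReal (by rw [hsum]; exact htail_half)
  have hincl : {ω | C < |∑ j, β j * X j ω|}
      ⊆ (⋃ j, {ω | t < |β j * X j ω|}) ∪ {ω | C ≤ |T ω|} := by
    intro ω hω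
    by_cases hb : ∃ j, t < |β j * X j ω|
    · exact Or.inl (mem_iUnion.2 ⟨hb.choose, hb.choose_spec⟩)
    · push_neg at hb
      refine Or.inr ?_
      have hTω : T ω = ∑ j, β j * X j ω := by
        rw [hTdef, Finset.sum_apply]
        exact Finset.sum_congr rfl (fun j _ => trunc_eq_of_le (hb j))
      simp only [mem_setOf_eq] at hω ⊢
      rw [hTω]
      exact hω.le
  have hfinal : μ {ω | C < |∑ j, β j * X j ω|} ≤ ENNReal.ofReal ε := by
    calc μ {ω | C < |∑ j, β j * X j ω|}
        ≤ μ ((⋃ j, {ω | t < |β j * X j ω|}) ∪ {ω | C ≤ |T ω|}) := measure_mono hincl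
      _ ≤ μ (⋃ j, {ω | t < |β j * X j ω|}) + μ {ω | C ≤ |T ω|} := measure_union_le _ _
      _ ≤ ENNReal.ofReal (ε/2) + ENNReal.ofReal (ε/2) := add_le_add hbad hcheb2
      _ = ENNReal.ofReal ε := by
          rw [← ENNReal.ofReal_add (by linarith) (by linarith)]
          norm_num
  exact ENNReal.toReal_le_of_le_ofReal hε.le hfinal
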